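/- A finite simple graph G is an interval graph if and only if G has a clique ordering. -/

import Mathlib

variable {V : Type*}

/-- `Q` is a maximal clique of the simple graph `G`. -/
def IsMaxClique (G : SimpleGraph V) (Q : Finset V) : Prop :=
  G.IsClique (Q : Set V) ∧
    ∀ R : Finset V, G.IsClique (R : Set V) → Q ⊆ R → Q = R

/-- `S` is a clique ordering of `G`: a finite sequence of (possibly empty) cliques
containing every maximal clique, in which the indices of cliques containing any
fixed vertex are consecutive. -/
def IsCliqueOrdering (G : SimpleGraph V) (S : List (Finset V)) : Prop :=
  (∀ Q ∈ S, G.IsClique (Q : Set V)) ∧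
  (∀ Q : Finset V, IsMaxClique G Q → Q ∈ S) ∧
  (∀ v : V, ∀ i j k : ℕ, i ≤ j → j ≤ k → k < S.length →
    v ∈ S.getD i ∅ → v ∈ S.getD k ∅ → v ∈ S.getD j ∅)

/-- `G` is an interval graph: each vertex gets a nonempty closed real interval,
and two distinct vertices are adjacent iff their intervals intersect. -/
def IsIntervalGraph (G : SimpleGraph V) : Prop :=
  ∃ a b : V → ℝ, (∀ v, a v ≤ b v) ∧
    ∀ u v : V, u ≠ v →
      (G.Adj u v ↔ (Set.Icc (a u) (b u) ∩ Set.Icc (a v) (b v)).Nonempty)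

/-- Every clique (as a finset) is contained in a maximal clique. -/
lemma exists_maxClique_superset {V : Type*} [Fintype V] (G : SimpleGraph V)
    (C : Finset V) (hC : G.IsClique (C : Set V)) :
    ∃ Q : Finset V, IsMaxClique G Q ∧ C ⊆ Q := by
  classical
  set s : Finset (Finset V) :=
    Finset.univ.filter (fun Q => G.IsClique (Q : Set V) ∧ C ⊆ Q) with hs
  have hsne : s.Nonempty := ⟨C, by simp [hs, hC]⟩
  obtain ⟨Q, hQs, hmax⟩ := s.exists_max_image Finset.card hsne
  simp only [hs, Finset.mem_filter, Finset.mem_univ, true_and] at hQs hmax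
  refine ⟨Q, ⟨hQs.1, fun R hR hsub => ?_⟩, hQs.2⟩
  exact Finset.eq_of_subset_of_card_le hsub (hmax R ⟨hR, hQs.2.trans hsub⟩)

/-- A finite simple graph is an interval graph iff it has a clique ordering. -/
theorem interval_iff_cliqueOrdering {V : Type*} [Fintype V] (G : SimpleGraph V) :
    IsIntervalGraph G ↔ ∃ S : List (Finset V), IsCliqueOrdering G S := by
  classical
  constructor
  · rintro ⟨a, b, hab, hiff⟩
    set C : ℝ → Finset V := fun x => Finset.univ.filter (fun v => a v ≤ x ∧ x ≤ b v) with hCdef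
    have hCmem : ∀ x v, v ∈ C x ↔ a v ≤ x ∧ x ≤ b v := by
      intro x v; simp [hCdef]
    have hCclique : ∀ x, G.IsClique ((C x : Set V)) := by
      intro x u hu v hv huv
      rw [Finset.mem_coe, hCmem] at hu hv
      exact (hiff u v huv).2 ⟨x, ⟨hu.1, hu.2⟩, ⟨hv.1, hv.2⟩⟩
    set L : List ℝ := (Finset.univ.image a).sort (· ≤ ·) with hLdef
    have hLsorted : L.Pairwise (· ≤ ·) := Finset.pairwise_sort _ _
    have hLmono : ∀ (i j : ℕ) (hi : i < L.length) (hj : j < L.length), i ≤ j → L[i] ≤ L[j] := by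
      intro i j hi hj hle
      rcases eq_or_lt_of_le hle with rfl | hlt
      · exact le_refl _
      · exact List.pairwise_iff_getElem.1 hLsorted i j hi hj hlt
    refine ⟨∅ :: L.map C, ?_, ?_, ?_⟩
    · intro Q hQ
      rcases List.mem_cons.1 hQ with h | h
      · subst h; simp
      · obtain ⟨x, -, rfl⟩ := List.mem_map.1 h
        exact hCclique x
    · intro Q hQ
      rcases Q.eq_empty_or_nonempty with rfl | hne
      · exact List.mem_cons_self
      · obtain ⟨v0, hv0, hmax⟩ := Q.exists_max_image a hne
        have hsub : Q ⊆ C (a v0) := by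
          intro u hu
          rw [hCmem]
          refine ⟨hmax u hu, ?_⟩
          rcases eq_or_ne u v0 with rfl | hne'
          · exact hab u
          · have hadj : G.Adj u v0 := hQ.1 hu hv0 hne'
            obtain ⟨x, ⟨_, hx2⟩, ⟨hx3, _⟩⟩ := (hiff u v0 hne').1 hadj
            exact hx3.trans hx2
        have hQeq : Q = C (a v0) := hQ.2 _ (hCclique _) hsub
        rw [hQeq]
        refine List.mem_cons_of_mem _ (List.mem_map.2 ⟨a v0, ?_, rfl⟩)
        rw [hLdef, Finset.mem_sort]
        exact Finset.mem_image_of_mem a (Finset.mem_univ v0)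
    · intro v i j k hij hjk hk hvi hvk
      match i, j, k with
      | 0, _, _ => simp at hvi
      | _ + 1, 0, _ => omega
      | _ + 1, _ + 1, 0 => omega
      | i + 1, j + 1, k + 1 =>
        simp only [List.getD_cons_succ] at hvi hvk ⊢
        simp only [List.length_cons, List.length_map] at hk
        have hk' : k < L.length := by omega
        have hj' : j < L.length := by omega
        have hi' : i < L.length := by omega
        rw [List.getD_eq_getElem _ _ (by simpa using hi'), List.getElem_map] at hvi
        rw [List.getD_eq_getElem _ _ (by simpa using hk'), List.getElem_map] at hvk
        rw [List.getD_eq_getElem _ _ (by simpa using hj'), List.getElem_map]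
        rw [hCmem] at hvi hvk ⊢
        exact ⟨hvi.1.trans (hLmono i j hi' hj' (by omega)),
          (hLmono j k hj' hk' (by omega)).trans hvk.2⟩
  · rintro ⟨S, hclq, hmem, hcons⟩
    set I : V → Finset ℕ :=
      fun v => (Finset.range S.length).filter (fun i => v ∈ S.getD i ∅) with hIdef
    have hImem : ∀ v i, i ∈ I v ↔ i < S.length ∧ v ∈ S.getD i ∅ := by
      intro v i; simp [hIdef]
    have hIne : ∀ v, (I v).Nonempty := by
      intro v
      obtain ⟨Q, hQ, hvQ⟩ := exists_maxClique_superset G {v} (by simp)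
      have hQS : Q ∈ S := hmem Q hQ
      obtain ⟨i, hi, hgi⟩ := List.getElem_of_mem hQS
      refine ⟨i, (hImem v i).2 ⟨hi, ?_⟩⟩
      rw [List.getD_eq_getElem _ _ hi, hgi]
      exact hvQ (Finset.mem_singleton_self v)
    refine ⟨fun v => ((I v).min' (hIne v) : ℝ), fun v => ((I v).max' (hIne v) : ℝ),
      fun v => by beta_reduce; exact_mod_cast (I v).min'_le _ ((I v).max'_mem (hIne v)), ?_⟩
    intro u v huv
    constructor
    · intro hadj
      have hpair : G.IsClique (({u, v} : Finset V) : Set V) := by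
        rw [Finset.coe_insert, Finset.coe_singleton]
        exact SimpleGraph.isClique_pair.2 (fun _ => hadj)
      obtain ⟨Q, hQ, hsub⟩ := exists_maxClique_superset G {u, v} hpair
      have hQS : Q ∈ S := hmem Q hQ
      obtain ⟨i, hi, hgi⟩ := List.getElem_of_mem hQS
      have hiu : i ∈ I u := (hImem u i).2 ⟨hi, by
        rw [List.getD_eq_getElem _ _ hi, hgi]
        exact hsub (by simp)⟩
      have hiv : i ∈ I v := (hImem v i).2 ⟨hi, by
        rw [List.getD_eq_getElem _ _ hi, hgi]
        exact hsub (by simp)⟩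
      exact ⟨(i : ℝ),
        ⟨by beta_reduce; exact_mod_cast (I u).min'_le _ hiu, by beta_reduce; exact_mod_cast (I u).le_max' _ hiu⟩,
        ⟨by beta_reduce; exact_mod_cast (I v).min'_le _ hiv, by beta_reduce; exact_mod_cast (I v).le_max' _ hiv⟩⟩
    · rintro ⟨x, ⟨h1, h2⟩, ⟨h3, h4⟩⟩
      have hc1 : (I u).min' (hIne u) ≤ (I v).max' (hIne v) := by have h := h1.trans h4; beta_reduce at h; exact_mod_cast h
      have hc2 : (I v).min' (hIne v) ≤ (I u).max' (hIne u) := by have h := h3.trans h2; beta_reduce at h; exact_mod_cast h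
      set j := max ((I u).min' (hIne u)) ((I v).min' (hIne v)) with hjdef
      have hjU : j ≤ (I u).max' (hIne u) :=
        max_le ((I u).min'_le _ ((I u).max'_mem (hIne u))) hc2
      have hjV : j ≤ (I v).max' (hIne v) :=
        max_le hc1 ((I v).min'_le _ ((I v).max'_mem (hIne v)))
      have hUlen : (I u).max' (hIne u) < S.length :=
        ((hImem u _).1 ((I u).max'_mem (hIne u))).1
      have hVlen : (I v).max' (hIne v) < S.length :=
        ((hImem v _).1 ((I v).max'_mem (hIne v))).1
      have hu : u ∈ S.getD j ∅ :=
        hcons u _ j _ (le_max_left _ _) hjU hUlen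
          ((hImem u _).1 ((I u).min'_mem (hIne u))).2
          ((hImem u _).1 ((I u).max'_mem (hIne u))).2
      have hv : v ∈ S.getD j ∅ :=
        hcons v _ j _ (le_max_right _ _) hjV hVlen
          ((hImem v _).1 ((I v).min'_mem (hIne v))).2
          ((hImem v _).1 ((I v).max'_mem (hIne v))).2
      have hjlen : j < S.length := lt_of_le_of_lt hjU hUlen
      rw [List.getD_eq_getElem _ _ hjlen] at hu hv
      exact hclq _ (List.getElem_mem hjlen) hu hv huv
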